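/- Let λ ∈ 𝒫_C(n) have distinct parts a₁ > a₂ > ⋯ > a_m (m ≥ 2) with multiplicities k₁, k₂, …, k_m, where k₁ and k_m are odd and k₂, …, k_{m−1} are even. Then a_m is even, the only even part of the transpose λ* is K := k₁ + ⋯ + k_m = #λ, and the multiplicity of K in λ* equals a_m; in particular every part of λ* other than K is odd. -/

import Mathlib

namespace NilDual

/-- A "partition" is encoded as a multiset of natural numbers (its parts). -/
abbrev Ptn := Multiset ℕ

/-- All parts are positive. -/
def IsPartition (l : Ptn) : Prop := ∀ a ∈ l, 0 < a

/-- `height l a` is the number of parts of `l` that are ≥ `a`. -/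
def height (l : Ptn) (a : ℕ) : ℕ := Multiset.card (l.filter (fun p => a ≤ p))

/-- `psum l j` is the sum of the `j` largest parts of `l`. -/
def psum (l : Ptn) (j : ℕ) : ℕ := ∑ a ∈ Finset.Icc 1 l.sum, min j (height l a)

/-- `Dom l m` means `l ≤ m` in the dominance order. -/
def Dom (l m : Ptn) : Prop := ∀ j : ℕ, psum l j ≤ psum m j

/-- The transpose (conjugate) partition. -/
def transpose (l : Ptn) : Ptn :=
  Multiset.filter (fun x => 0 < x)
    (Multiset.map (fun a => height l a) (Finset.Icc 1 l.sum).val)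

/-- The largest part (0 for the empty partition). -/
def maxPart (l : Ptn) : ℕ := l.sup

/-- The smallest part (0 for the empty partition). -/
noncomputable def minPart (l : Ptn) : ℕ := sInf {a : ℕ | a ∈ l}

/-- `λ⁺`: add 1 to the largest part. -/
def up (l : Ptn) : Ptn := (maxPart l + 1) ::ₘ l.erase (maxPart l)

/-- `λ⁻`: subtract 1 from the smallest part, deleting it if it becomes 0. -/
noncomputable def down (l : Ptn) : Ptn :=
  if minPart l ≤ 1 then l.erase (minPart l)
  else (minPart l - 1) ::ₘ l.erase (minPart l)

/-- The join `λ ∨ μ = (λ* ∪ μ*)*`. -/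
def pjoin (l m : Ptn) : Ptn := transpose (transpose l + transpose m)

/-- `λ₋ = (λ*⁻)*`. -/
noncomputable def lowerStar (l : Ptn) : Ptn := transpose (down (transpose l))

inductive PType | B | C | D
deriving DecidableEq

/-- Parts of this parity must occur with even multiplicity in a partition of type `X`. -/
def badPart : PType → ℕ → Prop
  | PType.B, a => Even a
  | PType.C, a => Odd a
  | PType.D, a => Even a

/-- Membership in `𝒫_X` (sum unconstrained). -/
def InP (X : PType) (l : Ptn) : Prop :=
  IsPartition l ∧ ∀ a : ℕ, badPart X a → Even (l.count a)

/-- The parity of `n` required for `𝒫_X(n)` to be defined. -/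
def sumParity : PType → ℕ → Prop
  | PType.B, n => Odd n
  | PType.C, n => Even n
  | PType.D, n => Even n

/-- `m` is the X-collapse of `l`: `m ∈ 𝒫_X(|l|)`, `m ≤ l` in dominance order, and `m`
dominates every member of `𝒫_X(|l|)` that is dominated by `l`. -/
def IsCollapse (X : PType) (l m : Ptn) : Prop :=
  InP X m ∧ m.sum = l.sum ∧ Dom m l ∧
    ∀ ν : Ptn, InP X ν → ν.sum = l.sum → Dom ν l → Dom ν m

def CollapseDefined (X : PType) (l : Ptn) : Prop := ∃ m, IsCollapse X l m

open Classical in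
/-- The X-collapse `λ_X` (junk value `0` if it does not exist). -/
noncomputable def collapse (X : PType) (l : Ptn) : Ptn :=
  if h : CollapseDefined X l then h.choose else 0

/-- `l` is superior to `m`: smallest part of `l` ≥ largest part of `m`. -/
def Superior (l m : Ptn) : Prop := maxPart m ≤ minPart l

def EvenlySuperior (l m : Ptn) : Prop := ∃ k : ℕ, Even k ∧ maxPart m ≤ k ∧ k ≤ minPart l

def OddlySuperior (l m : Ptn) : Prop := ∃ k : ℕ, Odd k ∧ maxPart m ≤ k ∧ k ≤ minPart l

/-- The parity required of marked parts in type `X`. -/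
def markParity : PType → ℕ → Prop
  | PType.C, a => Even a
  | _, a => Odd a

/-- `(ν, η)` is a marked partition of type `X`, with underlying partition `λ = ν + η`. -/
def IsMarked (X : PType) (nu eta : Ptn) : Prop :=
  InP X (nu + eta) ∧ sumParity X (nu + eta).sum ∧
  (∀ a ∈ nu, nu.count a = 1 ∧ markParity X a) ∧
  ((X = PType.B ∨ X = PType.D) → Even (Multiset.card nu))

/-- The Sommers duality map `d_S` on marked partitions `(ν, η)`. -/
noncomputable def dS (X : PType) (nu eta : Ptn) : Ptn :=
  match X with
  | PType.B => collapse PType.C (transpose (nu + collapse PType.C (down eta)))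
  | PType.C => collapse PType.B (transpose (nu + collapse PType.B (up eta)))
  | PType.D =>
      collapse PType.D (transpose (nu + transpose (collapse PType.D (transpose eta))))

/-- `a` is a markable part of `l` in type `X`. -/
def Markable (X : PType) (l : Ptn) (a : ℕ) : Prop :=
  a ∈ l ∧ markParity X a ∧
    (match X with
     | PType.B => Odd (height l a)
     | PType.C => Even (height l a)
     | PType.D => Even (height l a))

/-- The marked partition `⟨l, ν⟩` is reduced. -/
def Reduced (X : PType) (l nu : Ptn) : Prop := ∀ a ∈ nu, Markable X l a

/-- The parts entering the definition of a special marked partition: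
even of odd height (B), odd of even height (C), even of even height (D). -/
def AntiPart (X : PType) (l : Ptn) (a : ℕ) : Prop :=
  match X with
  | PType.B => Even a ∧ Odd (height l a)
  | PType.C => Odd a ∧ Even (height l a)
  | PType.D => Even a ∧ Even (height l a)

/-- The reduced marked partition `⟨l, ν⟩` is special. -/
def SpecialMP (X : PType) (l nu : Ptn) : Prop :=
  ∀ a ∈ l, AntiPart X l a → Even (height nu a)

/-- `a` is the largest part of `l` whose height satisfies `P`. -/
def LargestWith (l : Ptn) (P : ℕ → Prop) (a : ℕ) : Prop :=
  a ∈ l ∧ P (height l a) ∧ ∀ b ∈ l, P (height l b) → b ≤ a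

/-- Height parity for the top marked part in a basic block. -/
def heightParity : PType → ℕ → Prop
  | PType.B => fun n => Odd n
  | _ => fun n => Even n

/-- A basic block of type `X`. -/
def BasicBlock (X : PType) (nu eta : Ptn) : Prop :=
  IsMarked X nu eta ∧
  ((∃ n1 n2 : ℕ, n1 < n2 ∧ nu = {n2, n1} ∧ n1 = minPart (nu + eta) ∧
      LargestWith (nu + eta) (heightParity X) n2) ∨
   (X = PType.C ∧ ∃ n2 : ℕ, nu = {n2} ∧ LargestWith (nu + eta) (heightParity X) n2))

/-- An ultrabasic block: a basic block with `n₁ ≤ 1`. -/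
def Ultrabasic (X : PType) (nu eta : Ptn) : Prop :=
  BasicBlock X nu eta ∧ (Multiset.card nu = 2 → minPart nu ≤ 1)


private lemma filter_card_finsum {ι : Type*} (s : Finset ι) (f : ι → Multiset ℕ)
    (p : ℕ → Prop) [DecidablePred p] :
    Multiset.card (Multiset.filter p (∑ i ∈ s, f i))
      = ∑ i ∈ s, Multiset.card (Multiset.filter p (f i)) := by
  induction s using Finset.cons_induction with
  | empty => simp
  | cons a s ha ih => simp [Finset.sum_cons, Multiset.filter_add, ih]

private lemma card_finsum {ι : Type*} (s : Finset ι) (f : ι → Multiset ℕ) :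
    Multiset.card (∑ i ∈ s, f i) = ∑ i ∈ s, Multiset.card (f i) := by
  induction s using Finset.cons_induction with
  | empty => simp
  | cons a s ha ih => simp [Finset.sum_cons, ih]

private lemma sum_finsum {ι : Type*} (s : Finset ι) (f : ι → Multiset ℕ) :
    (∑ i ∈ s, f i).sum = ∑ i ∈ s, (f i).sum := by
  induction s using Finset.cons_induction with
  | empty => simp
  | cons a s ha ih => simp [Finset.sum_cons, ih]

private lemma card_filter_replicate (p : ℕ → Prop) [DecidablePred p] (n b : ℕ) :
    Multiset.card (Multiset.filter p (Multiset.replicate n b)) = if p b then n else 0 := by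
  by_cases h : p b
  · rw [Multiset.filter_eq_self.2 fun x hx => (Multiset.eq_of_mem_replicate hx) ▸ h]
    simp [h]
  · rw [Multiset.filter_eq_nil.2 fun x hx => (Multiset.eq_of_mem_replicate hx) ▸ h]
    simp [h]

/-- Properties of staircases from the proof of Lemma 5.5 of the paper: if
`λ ∈ 𝒫_C(n)` is a staircase with distinct parts `a₁ > ⋯ > a_m` (`m ≥ 2`) of
multiplicities `k₁, …, k_m` with `k₁, k_m` odd and the rest even, then `a_m` is even,
the only even part of `λ*` is `K = #λ`, it occurs with multiplicity `a_m`, and all other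
parts of `λ*` are odd. -/
theorem staircase_transpose (m : ℕ) (hm : 2 ≤ m) (a k : Fin m → ℕ) (lam : Ptn)
    (hlam : lam = ∑ i : Fin m, Multiset.replicate (k i) (a i))
    (hanti : ∀ i j : Fin m, i < j → a j < a i)
    (hpos : ∀ i, 0 < a i) (hkpos : ∀ i, 0 < k i)
    (hC : InP PType.C lam) (heven : Even lam.sum)
    (hk0 : Odd (k ⟨0, by omega⟩)) (hklast : Odd (k ⟨m - 1, by omega⟩))
    (hkmid : ∀ i : Fin m, i.val ≠ 0 → i.val ≠ m - 1 → Even (k i)) :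
    Even (a ⟨m - 1, by omega⟩) ∧
    Multiset.card lam ∈ transpose lam ∧
    Even (Multiset.card lam) ∧
    (∀ b ∈ transpose lam, Even b → b = Multiset.card lam) ∧
    (transpose lam).count (Multiset.card lam) = a ⟨m - 1, by omega⟩ ∧
    (∀ b ∈ transpose lam, b ≠ Multiset.card lam → Odd b) := by
  have hm1 : m - 1 < m := by omega
  have h0m : 0 < m := by omega
  set z : Fin m := ⟨0, h0m⟩ with hzdef
  set last : Fin m := ⟨m - 1, hm1⟩ with hlastdef
  have hzlast : z ≠ last := by
    simp only [hzdef, hlastdef, Ne, Fin.mk.injEq]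
    omega
  have hk0' : Odd (k z) := hk0
  have hklast' : Odd (k last) := hklast
  have hale : ∀ i : Fin m, a last ≤ a i := by
    intro i
    by_cases h : i = last
    · rw [h]
    · have hv : i.val ≠ m - 1 := fun hv => h (Fin.ext hv)
      have hil : i < last := by
        rw [Fin.lt_def]
        have := i.isLt
        simp only [hlastdef]
        omega
      exact (hanti i last hil).le
  have haz : ∀ i : Fin m, a i ≤ a z := by
    intro i
    by_cases h : i = z
    · rw [h]
    · have hv : i.val ≠ 0 := fun hv => h (Fin.ext hv)
      have hzi : z < i := by
        rw [Fin.lt_def]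
        simp only [hzdef]
        omega
      exact (hanti z i hzi).le
  have ha_inj : Function.Injective a := by
    intro i j h
    by_contra hne
    rcases lt_or_gt_of_ne hne with h1 | h1
    · exact (hanti i j h1).ne h.symm
    · exact (hanti j i h1).ne h
  have hcount : ∀ b : ℕ, lam.count b = ∑ i : Fin m, if a i = b then k i else 0 := by
    intro b
    rw [hlam, Multiset.count_sum']
    simp [Multiset.count_replicate]
  have hcount_a : ∀ i : Fin m, lam.count (a i) = k i := by
    intro i
    rw [hcount, Finset.sum_eq_single i
      (fun j _ hj => if_neg (fun h => hj (ha_inj h)))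
      (fun h => absurd (Finset.mem_univ i) h), if_pos rfl]
  -- a last is even
  have hEa : Even (a last) := by
    by_contra hodd
    have ho : Odd (a last) := Nat.not_even_iff_odd.mp hodd
    have hce : Even (lam.count (a last)) := hC.2 (a last) ho
    rw [hcount_a] at hce
    exact (Nat.not_odd_iff_even.mpr hce) hklast'
  -- height formula
  have hheight : ∀ x : ℕ, height lam x = ∑ i : Fin m, if x ≤ a i then k i else 0 := by
    intro x
    rw [height, hlam, filter_card_finsum]
    simp [card_filter_replicate]
  set K : ℕ := ∑ i : Fin m, k i with hK
  have hcardlam : Multiset.card lam = K := by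
    rw [hlam, card_finsum]
    simp [hK]
  have hKpos : 0 < K :=
    lt_of_lt_of_le (hkpos z) (Finset.single_le_sum (fun i _ => Nat.zero_le _) (Finset.mem_univ z))
  have hmidEven : Even (∑ i ∈ (Finset.univ.erase z).erase last, k i) := by
    apply Finset.even_sum
    intro i hi
    rw [Finset.mem_erase, Finset.mem_erase] at hi
    exact hkmid i (fun hv => hi.2.1 (Fin.ext hv)) (fun hv => hi.1 (Fin.ext hv))
  have hKsplit : K = k z + (k last + ∑ i ∈ (Finset.univ.erase z).erase last, k i) := by
    rw [Finset.add_sum_erase _ k (Finset.mem_erase.mpr ⟨hzlast.symm, Finset.mem_univ last⟩),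
      Finset.add_sum_erase _ k (Finset.mem_univ z)]
  have hKeven : Even K := by
    rw [hKsplit, ← add_assoc]
    exact (hk0'.add_odd hklast').add hmidEven
  -- Fact A : small x gives height K
  have hA : ∀ x : ℕ, x ≤ a last → height lam x = K := by
    intro x hx
    rw [hheight, hK]
    exact Finset.sum_congr rfl (fun i _ => if_pos (hx.trans (hale i)))
  -- Fact B1 : large x gives height < K
  have hB1 : ∀ x : ℕ, a last < x → height lam x < K := by
    intro x hx
    rw [hheight, hK]
    refine Finset.sum_lt_sum (fun i _ => by split <;> omega) ⟨last, Finset.mem_univ last, ?_⟩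
    rw [if_neg (not_le.mpr hx)]
    exact hkpos last
  -- Fact B2 : large x with positive height gives odd height
  have hB2 : ∀ x : ℕ, a last < x → 0 < height lam x → Odd (height lam x) := by
    intro x hx hpos'
    have hxz : x ≤ a z := by
      by_contra hxz
      push_neg at hxz
      have h0 : height lam x = 0 := by
        rw [hheight]
        exact Finset.sum_eq_zero (fun i _ => if_neg (by have := haz i; omega))
      omega
    rw [hheight, ← Finset.add_sum_erase _ _ (Finset.mem_univ z), if_pos hxz]
    apply hk0'.add_even
    apply Finset.even_sum
    intro i hi
    rw [Finset.mem_erase] at hi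
    by_cases h : x ≤ a i
    · rw [if_pos h]
      by_cases hl : i = last
      · exfalso
        rw [hl] at h
        omega
      · exact hkmid i (fun hv => hi.1 (Fin.ext hv)) (fun hv => hl (Fin.ext hv))
    · rw [if_neg h]
      exact Even.zero
  -- sums
  have hsum : lam.sum = ∑ i : Fin m, k i * a i := by
    rw [hlam, sum_finsum]
    simp [Multiset.sum_replicate, smul_eq_mul]
  have halast_le : a last ≤ lam.sum := by
    rw [hsum]
    calc a last ≤ k last * a last := Nat.le_mul_of_pos_left _ (hkpos last)
      _ ≤ ∑ i : Fin m, k i * a i :=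
        Finset.single_le_sum (f := fun i => k i * a i) (fun i _ => Nat.zero_le _)
          (Finset.mem_univ last)
  have hsum_pos : 0 < lam.sum := lt_of_lt_of_le (hpos last) halast_le
  -- membership characterization
  have hmem : ∀ b : ℕ, b ∈ transpose lam →
      0 < b ∧ ∃ x, 1 ≤ x ∧ x ≤ lam.sum ∧ height lam x = b := by
    intro b hb
    rw [transpose, Multiset.mem_filter, Multiset.mem_map] at hb
    obtain ⟨⟨x, hxmem, hxe⟩, hb0⟩ := hb
    rw [Finset.mem_val, Finset.mem_Icc] at hxmem
    exact ⟨hb0, x, hxmem.1, hxmem.2, hxe⟩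
  have hmemK : K ∈ transpose lam := by
    rw [transpose, Multiset.mem_filter, Multiset.mem_map]
    refine ⟨⟨1, ?_, hA 1 (hpos last)⟩, hKpos⟩
    rw [Finset.mem_val, Finset.mem_Icc]
    exact ⟨le_refl 1, hsum_pos⟩
  -- count of K in the transpose
  have hfeq : Finset.filter (fun x => K = height lam x) (Finset.Icc 1 lam.sum)
      = Finset.Icc 1 (a last) := by
    ext x
    simp only [Finset.mem_filter, Finset.mem_Icc]
    constructor
    · rintro ⟨⟨h1, h2⟩, hKx⟩
      refine ⟨h1, ?_⟩
      by_contra hgt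
      push_neg at hgt
      exact absurd hKx.symm (ne_of_lt (hB1 x hgt))
    · rintro ⟨h1, h2⟩
      exact ⟨⟨h1, h2.trans halast_le⟩, (hA x h2).symm⟩
  have hcountK : (transpose lam).count K = a last := by
    rw [transpose, Multiset.count_filter, if_pos hKpos, Multiset.count_map, ← Finset.filter_val,
      hfeq]
    show (Finset.Icc 1 (a last)).card = a last
    rw [Nat.card_Icc]
    omega
  refine ⟨hEa, ?_, ?_, ?_, ?_, ?_⟩
  · rw [hcardlam]
    exact hmemK
  · rw [hcardlam]
    exact hKeven
  · intro b hb hbe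
    obtain ⟨hb0, x, hx1, hx2, hx⟩ := hmem b hb
    rw [hcardlam]
    by_cases h : x ≤ a last
    · rw [← hx, hA x h]
    · push_neg at h
      have := hB2 x h (by omega)
      rw [hx] at this
      exact absurd this (Nat.not_odd_iff_even.mpr hbe)
  · rw [hcardlam]
    exact hcountK
  · intro b hb hbne
    obtain ⟨hb0, x, hx1, hx2, hx⟩ := hmem b hb
    by_cases h : x ≤ a last
    · exfalso
      apply hbne
      rw [hcardlam, ← hx, hA x h]
    · push_neg at h
      have := hB2 x h (by omega)
      rwa [hx] at this

end NilDual
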